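/- Let H = ⟨a, b, c | a^{2^n} = 1, b^{2^m} = a^{2^m}, c^{2^ℓ} = 1, [b,a] = c, [c,a] = c^{-2}, [c,b] = c^{-2}⟩ with n ≥ m > ℓ ≥ 2, and let F be a field of characteristic 2. Then in FH the set {ab, abc} is a conjugacy class of H, so the element ab + abc is central in FH; consequently the element y² = b² + a² + ab + abc + 1, where y = b + a + 1, is central in FH. -/

import Mathlib

open FreeGroup in
/-- Relators of H = ⟨a,b,c | a^{2^n}=1, b^{2^m}=a^{2^m}, c^{2^ℓ}=1, [b,a]=c, [c,a]=c⁻²,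
[c,b]=c⁻²⟩ (convention [b,a] = b⁻¹a⁻¹ba; generators 0 ↦ a, 1 ↦ b, 2 ↦ c). -/
def relsH2 (n m ℓ : ℕ) : Set (FreeGroup (Fin 3)) :=
  { (of 0) ^ (2 ^ n), (of 1) ^ (2 ^ m) * ((of 0) ^ (2 ^ m))⁻¹, (of 2) ^ (2 ^ ℓ),
    (of 1)⁻¹ * (of 0)⁻¹ * of 1 * of 0 * (of 2)⁻¹,
    (of 2)⁻¹ * (of 0)⁻¹ * of 2 * of 0 * (of 2) ^ 2,
    (of 2)⁻¹ * (of 1)⁻¹ * of 2 * of 1 * (of 2) ^ 2 }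

abbrev H2 (n m ℓ : ℕ) := PresentedGroup (relsH2 n m ℓ)

/-- The generator a of H. -/
def ga (n m ℓ : ℕ) : H2 n m ℓ := PresentedGroup.of 0
/-- The generator b of H. -/
def gb (n m ℓ : ℕ) : H2 n m ℓ := PresentedGroup.of 1
/-- The generator c of H. -/
def gc (n m ℓ : ℕ) : H2 n m ℓ := PresentedGroup.of 2

namespace Stmt8Aux

/-! ### Abstract group computations from the three commutation relations -/

section Abstract
variable {G : Type*} [Group G] (a b c : G)
  (hba : b * a = a * b * c) (hca : c * a = a * c⁻¹) (hcb : c * b = b * c⁻¹)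

include hca in
lemma hc'a : c⁻¹ * a = a * c := by
  have h2 : c⁻¹ * (a * c⁻¹) = a := by rw [← hca]; group
  calc c⁻¹ * a = c⁻¹ * (a * c⁻¹) * c := by group
    _ = a * c := by rw [h2]

include hcb in
lemma hc'b : c⁻¹ * b = b * c := by
  have h2 : c⁻¹ * (b * c⁻¹) = b := by rw [← hcb]; group
  calc c⁻¹ * b = c⁻¹ * (b * c⁻¹) * c := by group
    _ = b * c := by rw [h2]

include hba hca in
lemma s_a : a * (a * b) = (a * b * c) * a := by
  calc a * (a * b) = a * (a * b * c * c⁻¹) := by group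
    _ = a * (b * a) * c⁻¹ := by rw [hba]; group
    _ = a * b * (a * c⁻¹) := by group
    _ = a * b * (c * a) := by rw [hca]
    _ = (a * b * c) * a := by group

include hba in
lemma s_a' : a * (a * b * c) = (a * b) * a := by
  calc a * (a * b * c) = a * (b * a) := by rw [hba]
    _ = (a * b) * a := by group

include hba in
lemma s_b : b * (a * b) = (a * b * c) * b := by
  calc b * (a * b) = (b * a) * b := by group
    _ = (a * b * c) * b := by rw [hba]

include hba hcb in
lemma s_b' : b * (a * b * c) = (a * b) * b := by
  calc b * (a * b * c) = (b * a) * (b * c) := by group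
    _ = (a * b * c) * (b * c) := by rw [hba]
    _ = a * b * (c * b) * c := by group
    _ = a * b * (b * c⁻¹) * c := by rw [hcb]
    _ = (a * b) * b := by group

include hca hcb in
lemma s_c : c * (a * b) = (a * b) * c := by
  calc c * (a * b) = (c * a) * b := by group
    _ = (a * c⁻¹) * b := by rw [hca]
    _ = a * (c⁻¹ * b) := by group
    _ = a * (b * c) := by rw [hc'b b c hcb]
    _ = (a * b) * c := by group

include hca hcb in
lemma s_c' : c * (a * b * c) = (a * b * c) * c := by
  calc c * (a * b * c) = (c * (a * b)) * c := by group
    _ = ((a * b) * c) * c := by rw [s_c a b c hca hcb]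
    _ = (a * b * c) * c := by group

include hba hcb in
lemma bb_a : (b * b) * a = a * (b * b) := by
  calc (b * b) * a = b * (b * a) := by group
    _ = b * (a * b * c) := by rw [hba]
    _ = (a * b) * b := s_b' a b c hba hcb
    _ = a * (b * b) := by group

include hcb in
lemma bb_c : c * (b * b) = (b * b) * c := by
  calc c * (b * b) = (c * b) * b := by group
    _ = (b * c⁻¹) * b := by rw [hcb]
    _ = b * (c⁻¹ * b) := by group
    _ = b * (b * c) := by rw [hc'b b c hcb]
    _ = (b * b) * c := by group

include hba hca in
lemma aa_b : b * (a * a) = (a * a) * b := by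
  calc b * (a * a) = (b * a) * a := by group
    _ = (a * b * c) * a := by rw [hba]
    _ = a * (b * (c * a)) := by group
    _ = a * (b * (a * c⁻¹)) := by rw [hca]
    _ = a * (b * a) * c⁻¹ := by group
    _ = a * (a * b * c) * c⁻¹ := by rw [hba]
    _ = (a * a) * b := by group

include hca in
lemma aa_c : c * (a * a) = (a * a) * c := by
  calc c * (a * a) = (c * a) * a := by group
    _ = (a * c⁻¹) * a := by rw [hca]
    _ = a * (c⁻¹ * a) := by group
    _ = a * (a * c) := by rw [hc'a a c hca]
    _ = (a * a) * c := by group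

end Abstract

/-! ### Concrete relations in H2 -/

variable {n m ℓ : ℕ}

lemma rel_eq_one {r : FreeGroup (Fin 3)} (hr : r ∈ relsH2 n m ℓ) :
    PresentedGroup.mk (relsH2 n m ℓ) r = 1 :=
  (QuotientGroup.eq_one_iff r).mpr (Subgroup.subset_normalClosure hr)

lemma rel4 : (gb n m ℓ)⁻¹ * (ga n m ℓ)⁻¹ * gb n m ℓ * ga n m ℓ * (gc n m ℓ)⁻¹ = 1 := by
  have := rel_eq_one (n := n) (m := m) (ℓ := ℓ)
    (r := (FreeGroup.of 1)⁻¹ * (FreeGroup.of 0)⁻¹ * FreeGroup.of 1 * FreeGroup.of 0 *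
      (FreeGroup.of 2)⁻¹) (by simp [relsH2])
  simpa [map_mul, map_inv, ga, gb, gc, PresentedGroup.of] using this

lemma rel5 : (gc n m ℓ)⁻¹ * (ga n m ℓ)⁻¹ * gc n m ℓ * ga n m ℓ * (gc n m ℓ) ^ 2 = 1 := by
  have := rel_eq_one (n := n) (m := m) (ℓ := ℓ)
    (r := (FreeGroup.of 2)⁻¹ * (FreeGroup.of 0)⁻¹ * FreeGroup.of 2 * FreeGroup.of 0 *
      (FreeGroup.of 2) ^ 2) (by simp [relsH2])
  simpa [map_mul, map_inv, map_pow, ga, gb, gc, PresentedGroup.of] using this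

lemma rel6 : (gc n m ℓ)⁻¹ * (gb n m ℓ)⁻¹ * gc n m ℓ * gb n m ℓ * (gc n m ℓ) ^ 2 = 1 := by
  have := rel_eq_one (n := n) (m := m) (ℓ := ℓ)
    (r := (FreeGroup.of 2)⁻¹ * (FreeGroup.of 1)⁻¹ * FreeGroup.of 2 * FreeGroup.of 1 *
      (FreeGroup.of 2) ^ 2) (by simp [relsH2])
  simpa [map_mul, map_inv, map_pow, ga, gb, gc, PresentedGroup.of] using this

lemma hba : gb n m ℓ * ga n m ℓ = ga n m ℓ * gb n m ℓ * gc n m ℓ := by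
  have h := rel4 (n := n) (m := m) (ℓ := ℓ)
  rw [mul_inv_eq_one] at h
  rw [← h]; group

lemma hca : gc n m ℓ * ga n m ℓ = ga n m ℓ * (gc n m ℓ)⁻¹ := by
  have h := rel5 (n := n) (m := m) (ℓ := ℓ)
  calc gc n m ℓ * ga n m ℓ
      = ga n m ℓ * (gc n m ℓ)⁻¹ *
        ((gc n m ℓ) ^ 2 * ((gc n m ℓ)⁻¹ * (ga n m ℓ)⁻¹ * gc n m ℓ * ga n m ℓ * (gc n m ℓ) ^ 2) *
          ((gc n m ℓ) ^ 2)⁻¹) := by group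
    _ = ga n m ℓ * (gc n m ℓ)⁻¹ := by rw [h]; group

lemma hcb : gc n m ℓ * gb n m ℓ = gb n m ℓ * (gc n m ℓ)⁻¹ := by
  have h := rel6 (n := n) (m := m) (ℓ := ℓ)
  calc gc n m ℓ * gb n m ℓ
      = gb n m ℓ * (gc n m ℓ)⁻¹ *
        ((gc n m ℓ) ^ 2 * ((gc n m ℓ)⁻¹ * (gb n m ℓ)⁻¹ * gc n m ℓ * gb n m ℓ * (gc n m ℓ) ^ 2) *
          ((gc n m ℓ) ^ 2)⁻¹) := by group
    _ = gb n m ℓ * (gc n m ℓ)⁻¹ := by rw [h]; group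

/-- A subgroup of H2 containing the three generators is everything. -/
lemma top_of_gens {K : Subgroup (H2 n m ℓ)} (h0 : ga n m ℓ ∈ K) (h1 : gb n m ℓ ∈ K)
    (h2 : gc n m ℓ ∈ K) (g : H2 n m ℓ) : g ∈ K := by
  have hle : Subgroup.closure (Set.range (PresentedGroup.of : Fin 3 → H2 n m ℓ)) ≤ K := by
    rw [Subgroup.closure_le]
    rintro _ ⟨i, rfl⟩
    fin_cases i
    · exact h0
    · exact h1
    · exact h2
  have := PresentedGroup.closure_range_of (relsH2 n m ℓ)
  rw [this] at hle
  exact hle (Subgroup.mem_top g)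

section Conj

variable (n m ℓ)

/-- The two-element set {ab, abc}. -/
def Sset : Set (H2 n m ℓ) := {ga n m ℓ * gb n m ℓ, ga n m ℓ * gb n m ℓ * gc n m ℓ}

variable {n m ℓ}

local notation "x₀" => ga n m ℓ * gb n m ℓ
local notation "y₀" => ga n m ℓ * gb n m ℓ * gc n m ℓ

lemma mem_Sset_iff {z : H2 n m ℓ} : z ∈ Sset n m ℓ ↔ z = x₀ ∨ z = y₀ := by
  simp [Sset]

lemma conj_a_x : ga n m ℓ * x₀ * (ga n m ℓ)⁻¹ = y₀ := by
  rw [s_a _ _ _ hba hca]; group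

lemma conj_a_y : ga n m ℓ * y₀ * (ga n m ℓ)⁻¹ = x₀ := by
  rw [s_a' _ _ _ hba]; group

lemma conj_a'_x : (ga n m ℓ)⁻¹ * x₀ * ga n m ℓ = y₀ := by
  conv_lhs => rw [← conj_a_y]
  group

lemma conj_a'_y : (ga n m ℓ)⁻¹ * y₀ * ga n m ℓ = x₀ := by
  conv_lhs => rw [← conj_a_x]
  group

lemma conj_b_x : gb n m ℓ * x₀ * (gb n m ℓ)⁻¹ = y₀ := by
  rw [s_b _ _ _ hba]; group

lemma conj_b_y : gb n m ℓ * y₀ * (gb n m ℓ)⁻¹ = x₀ := by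
  rw [s_b' _ _ _ hba hcb]; group

lemma conj_b'_x : (gb n m ℓ)⁻¹ * x₀ * gb n m ℓ = y₀ := by
  conv_lhs => rw [← conj_b_y]
  group

lemma conj_b'_y : (gb n m ℓ)⁻¹ * y₀ * gb n m ℓ = x₀ := by
  conv_lhs => rw [← conj_b_x]
  group

lemma conj_c_x : gc n m ℓ * x₀ * (gc n m ℓ)⁻¹ = x₀ := by
  rw [s_c _ _ _ hca hcb]; group

lemma conj_c_y : gc n m ℓ * y₀ * (gc n m ℓ)⁻¹ = y₀ := by
  rw [s_c' _ _ _ hca hcb]; group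

lemma conj_c'_x : (gc n m ℓ)⁻¹ * x₀ * gc n m ℓ = x₀ := by
  conv_lhs => rw [← conj_c_x]
  group

lemma conj_c'_y : (gc n m ℓ)⁻¹ * y₀ * gc n m ℓ = y₀ := by
  conv_lhs => rw [← conj_c_y]
  group

/-- The subgroup of elements whose conjugation (both ways) preserves {ab, abc}. -/
def Ks : Subgroup (H2 n m ℓ) where
  carrier := {g | (g * x₀ * g⁻¹ ∈ Sset n m ℓ ∧ g * y₀ * g⁻¹ ∈ Sset n m ℓ) ∧
    (g⁻¹ * x₀ * g ∈ Sset n m ℓ ∧ g⁻¹ * y₀ * g ∈ Sset n m ℓ)}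
  one_mem' := by
    constructor <;> constructor <;> simp [mem_Sset_iff]
  mul_mem' := by
    rintro g h ⟨⟨hg1, hg2⟩, ⟨hg3, hg4⟩⟩ ⟨⟨hh1, hh2⟩, ⟨hh3, hh4⟩⟩
    have fwd : ∀ z ∈ Sset n m ℓ, (g * h) * z * (g * h)⁻¹ ∈ Sset n m ℓ := by
      intro z hz
      have e : (g * h) * z * (g * h)⁻¹ = g * (h * z * h⁻¹) * g⁻¹ := by group
      rw [e]
      rcases (mem_Sset_iff).mp hz with rfl | rfl
      · rcases (mem_Sset_iff).mp hh1 with h' | h' <;> rw [h']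
        · exact hg1
        · exact hg2
      · rcases (mem_Sset_iff).mp hh2 with h' | h' <;> rw [h']
        · exact hg1
        · exact hg2
    have bwd : ∀ z ∈ Sset n m ℓ, (g * h)⁻¹ * z * (g * h) ∈ Sset n m ℓ := by
      intro z hz
      have e : (g * h)⁻¹ * z * (g * h) = h⁻¹ * (g⁻¹ * z * g) * h := by group
      rw [e]
      rcases (mem_Sset_iff).mp hz with rfl | rfl
      · rcases (mem_Sset_iff).mp hg3 with h' | h' <;> rw [h']
        · exact hh3
        · exact hh4
      · rcases (mem_Sset_iff).mp hg4 with h' | h' <;> rw [h']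
        · exact hh3
        · exact hh4
    exact ⟨⟨fwd _ (mem_Sset_iff.mpr (Or.inl rfl)), fwd _ (mem_Sset_iff.mpr (Or.inr rfl))⟩,
      ⟨bwd _ (mem_Sset_iff.mpr (Or.inl rfl)), bwd _ (mem_Sset_iff.mpr (Or.inr rfl))⟩⟩
  inv_mem' := by
    rintro g ⟨⟨hg1, hg2⟩, ⟨hg3, hg4⟩⟩
    refine ⟨⟨?_, ?_⟩, ⟨?_, ?_⟩⟩ <;> simp only [inv_inv] <;> assumption

lemma mem_Ks (g : H2 n m ℓ) : g ∈ (Ks : Subgroup (H2 n m ℓ)) := by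
  apply top_of_gens
  · exact ⟨⟨mem_Sset_iff.mpr (Or.inr conj_a_x), mem_Sset_iff.mpr (Or.inl conj_a_y)⟩,
      ⟨mem_Sset_iff.mpr (Or.inr conj_a'_x), mem_Sset_iff.mpr (Or.inl conj_a'_y)⟩⟩
  · exact ⟨⟨mem_Sset_iff.mpr (Or.inr conj_b_x), mem_Sset_iff.mpr (Or.inl conj_b_y)⟩,
      ⟨mem_Sset_iff.mpr (Or.inr conj_b'_x), mem_Sset_iff.mpr (Or.inl conj_b'_y)⟩⟩
  · exact ⟨⟨mem_Sset_iff.mpr (Or.inl conj_c_x), mem_Sset_iff.mpr (Or.inr conj_c_y)⟩,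
      ⟨mem_Sset_iff.mpr (Or.inl conj_c'_x), mem_Sset_iff.mpr (Or.inr conj_c'_y)⟩⟩

/-- ab + abc is a full conjugacy class. -/
lemma class_eq : {h : H2 n m ℓ | IsConj x₀ h} = Sset n m ℓ := by
  ext h
  constructor
  · intro hc
    obtain ⟨g, hg⟩ := isConj_iff.mp hc
    rw [Set.mem_setOf_eq] at *
    rw [← hg]
    exact ((mem_Ks g).1).1
  · intro hm
    rcases mem_Sset_iff.mp hm with rfl | rfl
    · exact IsConj.refl _
    · exact isConj_iff.mpr ⟨ga n m ℓ, conj_a_x⟩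

/-- b² is central in H2. -/
lemma b2_central (h : H2 n m ℓ) : (gb n m ℓ) ^ 2 * h = h * (gb n m ℓ) ^ 2 := by
  have : h ∈ Subgroup.centralizer {(gb n m ℓ) ^ 2} := by
    apply top_of_gens
    · exact Subgroup.mem_centralizer_singleton_iff.mpr
        (by rw [sq]; exact (bb_a _ _ _ hba hcb).symm)
    · exact Subgroup.mem_centralizer_singleton_iff.mpr (by rw [sq, mul_assoc])
    · exact Subgroup.mem_centralizer_singleton_iff.mpr (by rw [sq]; exact bb_c _ _ hcb)
  exact (Subgroup.mem_centralizer_singleton_iff.mp this).symm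

/-- a² is central in H2. -/
lemma a2_central (h : H2 n m ℓ) : (ga n m ℓ) ^ 2 * h = h * (ga n m ℓ) ^ 2 := by
  have : h ∈ Subgroup.centralizer {(ga n m ℓ) ^ 2} := by
    apply top_of_gens
    · exact Subgroup.mem_centralizer_singleton_iff.mpr (by rw [sq, mul_assoc])
    · exact Subgroup.mem_centralizer_singleton_iff.mpr
        (by rw [sq]; exact aa_b _ _ _ hba hca)
    · exact Subgroup.mem_centralizer_singleton_iff.mpr (by rw [sq]; exact aa_c _ _ hca)
  exact (Subgroup.mem_centralizer_singleton_iff.mp this).symm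

end Conj

/-! ### MonoidAlgebra facts -/

section Algebra

variable {F : Type*} [Field F] [CharP F 2] {n m ℓ : ℕ}

lemma add_self (xx : MonoidAlgebra F (H2 n m ℓ)) : xx + xx = 0 := by
  rw [← two_smul F xx, show (2 : F) = 0 from CharTwo.two_eq_zero, zero_smul]

lemma comm_all {z : MonoidAlgebra F (H2 n m ℓ)}
    (hcomm : ∀ g : H2 n m ℓ, z * MonoidAlgebra.of F (H2 n m ℓ) g
      = MonoidAlgebra.of F (H2 n m ℓ) g * z) (u : MonoidAlgebra F (H2 n m ℓ)) :
    z * u = u * z := by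
  induction u using MonoidAlgebra.induction_on with
  | of g => exact hcomm g
  | add f g hf hg => rw [mul_add, add_mul, hf, hg]
  | smul r f hf => rw [mul_smul_comm, smul_mul_assoc, hf]

local notation "x₀" => ga n m ℓ * gb n m ℓ
local notation "y₀" => ga n m ℓ * gb n m ℓ * gc n m ℓ
local notation "em" => MonoidAlgebra.of F (H2 n m ℓ)

lemma classsum_comm (g : H2 n m ℓ) :
    (em x₀ + em y₀) * em g = em g * (em x₀ + em y₀) := by
  have key : ∀ z : H2 n m ℓ, em z * em g = em g * em (g⁻¹ * z * g) := by
    intro z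
    rw [← map_mul, ← map_mul]
    congr 1
    group
  by_cases hxy : (x₀ : H2 n m ℓ) = y₀
  · rw [← hxy, add_self, zero_mul, mul_zero]
  · have hu := mem_Sset_iff.mp ((mem_Ks (n := n) (m := m) (ℓ := ℓ) g).2.1)
    have hv := mem_Sset_iff.mp ((mem_Ks (n := n) (m := m) (ℓ := ℓ) g).2.2)
    rcases hu with hu | hu <;> rcases hv with hv | hv
    · exact absurd (mul_left_cancel (mul_right_cancel (hu.trans hv.symm))) hxy
    · rw [add_mul, key x₀, key y₀, hu, hv, mul_add]
    · rw [add_mul, key x₀, key y₀, hu, hv, ← mul_add]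
      exact congrArg (fun t => em g * t) (add_comm _ _)
    · exact absurd (mul_left_cancel (mul_right_cancel (hu.trans hv.symm))) hxy

lemma square_expand :
    (em (gb n m ℓ) + em (ga n m ℓ) + 1) ^ 2 =
      em ((gb n m ℓ) ^ 2) + em ((ga n m ℓ) ^ 2) + em x₀ + em y₀ + 1 := by
  have h1 : em (gb n m ℓ) * em (gb n m ℓ) = em ((gb n m ℓ) ^ 2) := by rw [← map_mul, sq]
  have h2 : em (ga n m ℓ) * em (ga n m ℓ) = em ((ga n m ℓ) ^ 2) := by rw [← map_mul, sq]
  have h3 : em (ga n m ℓ) * em (gb n m ℓ) = em x₀ := (map_mul _ _ _).symm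
  have h4 : em (gb n m ℓ) * em (ga n m ℓ) = em y₀ := by rw [← map_mul, hba]
  rw [sq]
  rw [show ∀ xx yy zz : MonoidAlgebra F (H2 n m ℓ), (xx + yy + zz) * (xx + yy + zz)
      = xx*xx + xx*yy + xx*zz + yy*xx + yy*yy + yy*zz + zz*xx + zz*yy + zz*zz from
    fun xx yy zz => by noncomm_ring]
  rw [h1, h2, h3, h4, mul_one, one_mul, mul_one, one_mul, mul_one]
  have hz := add_self (F := F) (n := n) (m := m) (ℓ := ℓ)
  abel_nf
  simp only [two_smul, hz, add_zero, zero_add]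

lemma square_comm (g : H2 n m ℓ) :
    (em (gb n m ℓ) + em (ga n m ℓ) + 1) ^ 2 * em g
      = em g * (em (gb n m ℓ) + em (ga n m ℓ) + 1) ^ 2 := by
  rw [square_expand]
  have t1 : em ((gb n m ℓ) ^ 2) * em g = em g * em ((gb n m ℓ) ^ 2) := by
    rw [← map_mul, ← map_mul, b2_central]
  have t2 : em ((ga n m ℓ) ^ 2) * em g = em g * em ((ga n m ℓ) ^ 2) := by
    rw [← map_mul, ← map_mul, a2_central]
  have regroup : em ((gb n m ℓ) ^ 2) + em ((ga n m ℓ) ^ 2) + em x₀ + em y₀ + 1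
      = (em ((gb n m ℓ) ^ 2) + em ((ga n m ℓ) ^ 2) + 1) + (em x₀ + em y₀) := by abel
  rw [regroup, add_mul, mul_add, classsum_comm, add_mul, add_mul, mul_add, mul_add, t1, t2,
    one_mul, mul_one, mul_add]

end Algebra

end Stmt8Aux

open Stmt8Aux in
/-- For n ≥ m > ℓ ≥ 2 and F of characteristic 2: {ab, abc} is a conjugacy
class of H, the class sum ab + abc is central in FH, and consequently
y² = b² + a² + ab + abc + 1 is central in FH, where y = b + a + 1. -/
theorem stmt8 (n m ℓ : ℕ) (hℓ : 2 ≤ ℓ) (hmℓ : ℓ < m) (hnm : m ≤ n)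
    (F : Type*) [Field F] [CharP F 2] :
    ({h : H2 n m ℓ | IsConj (ga n m ℓ * gb n m ℓ) h} =
      {ga n m ℓ * gb n m ℓ, ga n m ℓ * gb n m ℓ * gc n m ℓ}) ∧
    (∀ u : MonoidAlgebra F (H2 n m ℓ),
      (MonoidAlgebra.of F (H2 n m ℓ) (ga n m ℓ * gb n m ℓ) +
        MonoidAlgebra.of F (H2 n m ℓ) (ga n m ℓ * gb n m ℓ * gc n m ℓ)) * u =
      u * (MonoidAlgebra.of F (H2 n m ℓ) (ga n m ℓ * gb n m ℓ) +
        MonoidAlgebra.of F (H2 n m ℓ) (ga n m ℓ * gb n m ℓ * gc n m ℓ))) ∧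
    ((MonoidAlgebra.of F (H2 n m ℓ) (gb n m ℓ) + MonoidAlgebra.of F (H2 n m ℓ) (ga n m ℓ)
        + 1) ^ 2 =
      MonoidAlgebra.of F (H2 n m ℓ) (gb n m ℓ ^ 2) +
        MonoidAlgebra.of F (H2 n m ℓ) (ga n m ℓ ^ 2) +
        MonoidAlgebra.of F (H2 n m ℓ) (ga n m ℓ * gb n m ℓ) +
        MonoidAlgebra.of F (H2 n m ℓ) (ga n m ℓ * gb n m ℓ * gc n m ℓ) + 1) ∧
    (∀ u : MonoidAlgebra F (H2 n m ℓ),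
      ((MonoidAlgebra.of F (H2 n m ℓ) (gb n m ℓ) + MonoidAlgebra.of F (H2 n m ℓ) (ga n m ℓ)
        + 1) ^ 2) * u =
      u * (MonoidAlgebra.of F (H2 n m ℓ) (gb n m ℓ) + MonoidAlgebra.of F (H2 n m ℓ) (ga n m ℓ)
        + 1) ^ 2) := by
  refine ⟨class_eq, fun u => comm_all classsum_comm u, square_expand,
    fun u => comm_all square_comm u⟩
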